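/- Suppose each coordinate of c : ℝ → ℝⁿ is real-analytic on an open set containing (0,1). Then the optimal value function val is locally Lipschitz on (0,1); moreover, for every closed interval [a,b] ⊂ (0,1) there exist finitely many points a = t₀ ≤ t₁ ≤ ⋯ ≤ t_k = b and vertices v₁, …, v_k ∈ V such that val(ε) = h_{v_i}(ε) for all ε ∈ [t_{i−1}, t_i] and each i; in particular val is piecewise analytic on (0,1), with pieces among the analytic functions h_v. -/

import Mathlib

open Filter Set

-- min of Lipschitz is Lipschitz
private lemma lipschitzOnWith_min {f g : ℝ → ℝ} {s : Set ℝ} {K K' : NNReal}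
    (hf : LipschitzOnWith K f s) (hg : LipschitzOnWith K' g s) :
    LipschitzOnWith (max K K') (fun x => min (f x) (g x)) s := by
  rw [lipschitzOnWith_iff_dist_le_mul] at hf hg ⊢
  intro x hx y hy
  simp only [Real.dist_eq] at hf hg ⊢
  refine (abs_min_sub_min_le_max _ _ _ _).trans ?_
  refine max_le ((hf x hx y hy).trans ?_) ((hg x hx y hy).trans ?_)
  · exact mul_le_mul_of_nonneg_right (by exact_mod_cast le_max_left K K') (abs_nonneg _)
  · exact mul_le_mul_of_nonneg_right (by exact_mod_cast le_max_right K K') (abs_nonneg _)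

private lemma sign_le_aux {f g : ℝ → ℝ} {p q : ℝ} (hpq : p < q)
    (hf : ContinuousOn f (Icc p q)) (hg : ContinuousOn g (Icc p q))
    (hcase : (∀ ε ∈ Ioo p q, f ε = g ε) ∨ (∀ ε ∈ Ioo p q, f ε ≠ g ε))
    {m : ℝ} (hm : m ∈ Ioo p q) (hfm : f m ≤ g m) :
    ∀ ε ∈ Icc p q, f ε ≤ g ε := by
  have hIoo : ∀ ε ∈ Ioo p q, f ε ≤ g ε := by
    rcases hcase with heq | hne
    · exact fun ε hε => (heq ε hε).le
    · intro ε hε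
      by_contra hlt
      push_neg at hlt
      have hsub : uIcc ε m ⊆ Ioo p q := Set.ordConnected_Ioo.uIcc_subset hε hm
      have hd : ContinuousOn (fun t => g t - f t) (uIcc ε m) :=
        (hg.sub hf).mono (hsub.trans Ioo_subset_Icc_self)
      have hdm : 0 < g m - f m := sub_pos.mpr (lt_of_le_of_ne hfm (hne m hm))
      have h0 : (0:ℝ) ∈ uIcc ((fun t => g t - f t) ε) ((fun t => g t - f t) m) := by
        rw [mem_uIcc]
        left
        constructor <;> simp <;> linarith
      obtain ⟨x, hx, hx0⟩ := intermediate_value_uIcc hd h0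
      exact hne x (hsub hx) (by have := hx0; simp only [] at this; linarith)
  intro ε hε
  have hεcl : ε ∈ closure (Ioo p q) := by rw [closure_Ioo hpq.ne]; exact hε
  have hnb : (nhdsWithin ε (Ioo p q)).NeBot := mem_closure_iff_nhdsWithin_neBot.mp hεcl
  have hft : Tendsto f (nhdsWithin ε (Ioo p q)) (nhds (f ε)) :=
    (hf ε hε).mono_left (nhdsWithin_mono ε Ioo_subset_Icc_self)
  have hgt : Tendsto g (nhdsWithin ε (Ioo p q)) (nhds (g ε)) :=
    (hg ε hε).mono_left (nhdsWithin_mono ε Ioo_subset_Icc_self)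
  refine le_of_tendsto_of_tendsto hft hgt ?_
  filter_upwards [eventually_mem_nhdsWithin] with t ht using hIoo t ht

theorem val_locally_lipschitz_piecewise_analytic
    (n : ℕ) (hn : 1 ≤ n)
    (V : Finset (Fin n → ℝ)) (hV : V.Nonempty)
    (c : ℝ → (Fin n → ℝ))
    (hc : ∃ U : Set ℝ, IsOpen U ∧ Set.Ioo (0 : ℝ) 1 ⊆ U ∧
      ∀ i, AnalyticOnNhd ℝ (fun ε => c ε i) U)
    (h : (Fin n → ℝ) → ℝ → ℝ)
    (hh : ∀ v ε, h v ε = ∑ i, c ε i * v i)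
    (val : ℝ → ℝ) (hval : ∀ ε, val ε = V.inf' hV (fun v => h v ε)) :
    (∀ x ∈ Set.Ioo (0 : ℝ) 1, ∃ K : NNReal, ∃ s ∈ nhds x, LipschitzOnWith K val s) ∧
    (∀ a b : ℝ, 0 < a → a ≤ b → b < 1 →
      ∃ (k : ℕ) (t : Fin (k + 1) → ℝ) (w : Fin k → (Fin n → ℝ)),
        t 0 = a ∧ t (Fin.last k) = b ∧ Monotone t ∧
        ∀ i : Fin k, w i ∈ V ∧
          ∀ ε ∈ Set.Icc (t i.castSucc) (t i.succ), val ε = h (w i) ε) := by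
  obtain ⟨U, hUo, hUsub, hA⟩ := hc
  have hanal : ∀ v : Fin n → ℝ, AnalyticOnNhd ℝ (h v) U := by
    intro v
    have h1 : AnalyticOnNhd ℝ (fun ε => ∑ i, c ε i * v i) U :=
      Finset.analyticOnNhd_fun_sum _ fun i _ => (hA i).mul analyticOnNhd_const
    have : h v = fun ε => ∑ i, c ε i * v i := funext (hh v)
    rw [this]; exact h1
  have hcont : ∀ v : Fin n → ℝ, ContinuousOn (h v) U := fun v => (hanal v).continuousOn
  have hvalfun : val = fun ε => V.inf' hV (fun v => h v ε) := funext hval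
  constructor
  · -- Part 1 : local Lipschitz
    intro x hx
    have hxU : x ∈ U := hUsub hx
    have single : ∀ v : Fin n → ℝ, ∃ K : NNReal, ∃ s ∈ nhds x, LipschitzOnWith K (h v) s := by
      intro v
      have := ((hanal v x hxU).contDiffAt (n := 1)).exists_lipschitzOnWith
      exact this
    have key : ∀ (W : Finset (Fin n → ℝ)) (hW : W.Nonempty),
        ∃ K : NNReal, ∃ s ∈ nhds x,
          LipschitzOnWith K (fun ε => W.inf' hW (fun v => h v ε)) s := by
      intro W hW
      induction hW using Finset.Nonempty.cons_induction with
      | singleton a =>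
        obtain ⟨K, s, hs, hl⟩ := single a
        exact ⟨K, s, hs, by simpa using hl⟩
      | cons a s ha hs ih =>
        obtain ⟨K1, s1, hs1, hl1⟩ := single a
        obtain ⟨K2, s2, hs2, hl2⟩ := ih
        refine ⟨max K1 K2, s1 ∩ s2, Filter.inter_mem hs1 hs2, ?_⟩
        have := lipschitzOnWith_min (hl1.mono Set.inter_subset_left)
          (hl2.mono Set.inter_subset_right)
        have heq : (fun ε => (Finset.cons a s ha).inf' (Finset.cons_nonempty ha) fun v => h v ε)
            = fun ε => min (h a ε) (s.inf' hs fun v => h v ε) := by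
          funext ε
          rw [Finset.inf'_cons]
        rw [heq]
        exact this
    rw [hvalfun]
    exact key V hV
  · -- Part 2 : piecewise
    intro a b ha hab hb
    -- argmin-on-interval lemma
    have argmin_on : ∀ p q : ℝ, p < q → Set.Icc p q ⊆ U →
        (∀ v ∈ V, ∀ w ∈ V,
          (∀ ε ∈ Set.Ioo p q, h v ε = h w ε) ∨ (∀ ε ∈ Set.Ioo p q, h v ε ≠ h w ε)) →
        ∃ v ∈ V, ∀ ε ∈ Set.Icc p q, val ε = h v ε := by
      intro p q hpq hsub hcase
      have hm : (p + q) / 2 ∈ Set.Ioo p q := ⟨by linarith, by linarith⟩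
      obtain ⟨v, hvV, hvmin⟩ := Finset.exists_min_image V (fun v => h v ((p + q) / 2)) hV
      refine ⟨v, hvV, fun ε hε => ?_⟩
      rw [hval]
      refine le_antisymm (Finset.inf'_le _ hvV) ?_
      refine Finset.le_inf' _ _ fun w hw => ?_
      exact sign_le_aux hpq ((hcont v).mono hsub) ((hcont w).mono hsub)
        (hcase v hvV w hw) hm (hvmin w hw) ε hε
    -- local two-sided representation
    have loc : ∀ x ∈ Set.Ioo (0 : ℝ) 1, ∃ δ > 0, 0 < x - δ ∧ x + δ < 1 ∧
        (∃ v ∈ V, ∀ ε ∈ Set.Icc x (x + δ), val ε = h v ε) ∧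
        (∃ v ∈ V, ∀ ε ∈ Set.Icc (x - δ) x, val ε = h v ε) := by
      intro x hx
      have hxU : x ∈ U := hUsub hx
      have pairs : ∀ p : (Fin n → ℝ) × (Fin n → ℝ), ∃ δ : ℝ, 0 < δ ∧
          ((∀ ε ∈ Set.Ioo (x - δ) (x + δ), h p.1 ε = h p.2 ε) ∨
           (∀ ε ∈ Set.Ioo (x - δ) (x + δ), ε ≠ x → h p.1 ε ≠ h p.2 ε)) := by
        rintro ⟨v, w⟩
        rcases (hanal v x hxU).eventually_eq_or_eventually_ne (hanal w x hxU) with hcase | hcase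
        · rw [Metric.eventually_nhds_iff_ball] at hcase
          obtain ⟨δ, hδ, hδ'⟩ := hcase
          refine ⟨δ, hδ, Or.inl fun ε hε => hδ' ε ?_⟩
          rw [Real.ball_eq_Ioo]; exact hε
        · rw [eventually_nhdsWithin_iff, Metric.eventually_nhds_iff_ball] at hcase
          obtain ⟨δ, hδ, hδ'⟩ := hcase
          refine ⟨δ, hδ, Or.inr fun ε hε hne => hδ' ε ?_ hne⟩
          rw [Real.ball_eq_Ioo]; exact hε
      choose δf hδpos hδcase using pairs
      have hPne : (V ×ˢ V).Nonempty := hV.product hV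
      set D : ℝ := (V ×ˢ V).inf' hPne δf with hD
      have hDpos : 0 < D := by
        rw [hD, Finset.lt_inf'_iff]
        exact fun p _ => hδpos p
      set δ : ℝ := min (D / 2) (min (x / 2) ((1 - x) / 2)) with hδdef
      have hδpos' : 0 < δ := by
        refine lt_min (by linarith) (lt_min (by linarith [hx.1]) (by linarith [hx.2]))
      have hδD : ∀ v ∈ V, ∀ w ∈ V, δ < δf (v, w) := by
        intro v hv w hw
        have h1 : D ≤ δf (v, w) := Finset.inf'_le _ (Finset.mem_product.mpr ⟨hv, hw⟩)
        have h2 : δ ≤ D / 2 := min_le_left _ _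
        linarith
      have hx0 : 0 < x - δ := by
        have : δ ≤ x / 2 := (min_le_right _ _).trans (min_le_left _ _)
        linarith [hx.1]
      have hx1 : x + δ < 1 := by
        have : δ ≤ (1 - x) / 2 := (min_le_right _ _).trans (min_le_right _ _)
        linarith [hx.2]
      have hsubU : ∀ {p q : ℝ}, x - δ ≤ p → q ≤ x + δ → Set.Icc p q ⊆ U := by
        intro p q hp hq
        refine Set.Subset.trans ?_ hUsub
        intro ε hε
        exact ⟨by linarith [hε.1], by linarith [hε.2]⟩
      have hcaseR : ∀ v ∈ V, ∀ w ∈ V,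
          (∀ ε ∈ Set.Ioo x (x + δ), h v ε = h w ε) ∨
          (∀ ε ∈ Set.Ioo x (x + δ), h v ε ≠ h w ε) := by
        intro v hv w hw
        have hδ' := hδD v hv w hw
        rcases hδcase (v, w) with hc | hc
        · exact Or.inl fun ε hε => hc ε ⟨by linarith [hε.1], by linarith [hε.2]⟩
        · exact Or.inr fun ε hε => hc ε ⟨by linarith [hε.1], by linarith [hε.2]⟩ hε.1.ne'
      have hcaseL : ∀ v ∈ V, ∀ w ∈ V,
          (∀ ε ∈ Set.Ioo (x - δ) x, h v ε = h w ε) ∨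
          (∀ ε ∈ Set.Ioo (x - δ) x, h v ε ≠ h w ε) := by
        intro v hv w hw
        have hδ' := hδD v hv w hw
        rcases hδcase (v, w) with hc | hc
        · exact Or.inl fun ε hε => hc ε ⟨by linarith [hε.1], by linarith [hε.2]⟩
        · exact Or.inr fun ε hε => hc ε ⟨by linarith [hε.1], by linarith [hε.2]⟩ hε.2.ne
      refine ⟨δ, hδpos', hx0, hx1, ?_, ?_⟩
      · exact argmin_on x (x + δ) (by linarith) (hsubU (by linarith) le_rfl) hcaseR
      · exact argmin_on (x - δ) x (by linarith) (hsubU le_rfl (by linarith)) hcaseL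
    -- partition predicate
    set P : ℝ → Prop := fun y =>
      ∃ (k : ℕ) (t : Fin (k + 1) → ℝ) (w : Fin k → (Fin n → ℝ)),
        t 0 = a ∧ t (Fin.last k) = y ∧ Monotone t ∧
        ∀ i : Fin k, w i ∈ V ∧
          ∀ ε ∈ Set.Icc (t i.castSucc) (t i.succ), val ε = h (w i) ε with hP
    have base : P a := ⟨0, fun _ => a, Fin.elim0, rfl, rfl, monotone_const, fun i => i.elim0⟩
    have append : ∀ x y : ℝ, P x → x ≤ y →
        (∃ v ∈ V, ∀ ε ∈ Set.Icc x y, val ε = h v ε) → P y := by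
      rintro x y ⟨k, t, w, ht0, htl, hmono, hpiece⟩ hxy ⟨v, hvV, hv⟩
      refine ⟨k + 1, Fin.snoc t y, Fin.snoc w v, ?_, ?_, ?_, ?_⟩
      · have h0 : (0 : Fin (k + 2)) = Fin.castSucc 0 := rfl
        rw [h0, Fin.snoc_castSucc]; exact ht0
      · rw [Fin.snoc_last]
      · intro i j hij
        induction j using Fin.lastCases with
        | last =>
          rw [Fin.snoc_last]
          induction i using Fin.lastCases with
          | last => rw [Fin.snoc_last]
          | cast i' =>
            rw [Fin.snoc_castSucc]
            calc t i' ≤ t (Fin.last k) := hmono (Fin.le_last i')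
              _ = x := htl
              _ ≤ y := hxy
        | cast j' =>
          induction i using Fin.lastCases with
          | last => exact absurd hij (not_le.mpr (Fin.castSucc_lt_last j'))
          | cast i' =>
            rw [Fin.snoc_castSucc, Fin.snoc_castSucc]
            exact hmono (Fin.castSucc_le_castSucc_iff.mp hij)
      · intro i
        induction i using Fin.lastCases with
        | last =>
          simp only [Fin.succ_last, Fin.snoc_last, Fin.snoc_castSucc, htl]
          exact ⟨hvV, hv⟩
        | cast j =>
          simp only [Fin.snoc_castSucc, Fin.succ_castSucc]
          exact hpiece j
    -- supremum argument
    set S : Set ℝ := {y : ℝ | y ∈ Set.Icc a b ∧ P y} with hS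
    have hSa : a ∈ S := ⟨⟨le_rfl, hab⟩, base⟩
    have hSbdd : BddAbove S := ⟨b, fun y hy => hy.1.2⟩
    set C : ℝ := sSup S with hC
    have haC : a ≤ C := le_csSup hSbdd hSa
    have hCb : C ≤ b := csSup_le ⟨a, hSa⟩ fun y hy => hy.1.2
    have hC01 : C ∈ Set.Ioo (0 : ℝ) 1 := ⟨lt_of_lt_of_le ha haC, lt_of_le_of_lt hCb hb⟩
    obtain ⟨δ, hδpos, hCδ0, hCδ1, ⟨vR, hvR, hR⟩, ⟨vL, hvL, hL⟩⟩ := loc C hC01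
    have hCS : P C := by
      obtain ⟨x, hxS, hxgt⟩ := exists_lt_of_lt_csSup ⟨a, hSa⟩ (show C - δ < C by linarith)
      have hxc : x ≤ C := le_csSup hSbdd hxS
      exact append x C hxS.2 hxc
        ⟨vL, hvL, fun ε hε => hL ε ⟨by linarith [hε.1], hε.2⟩⟩
    rcases eq_or_lt_of_le hCb with hCb' | hlt
    · exact hCb' ▸ hCS
    · exfalso
      set y : ℝ := min (C + δ) b with hy
      have hCy : C < y := lt_min (by linarith) hlt
      have hyS : y ∈ S := by
        refine ⟨⟨le_trans haC hCy.le, min_le_right _ _⟩, ?_⟩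
        exact append C y hCS hCy.le
          ⟨vR, hvR, fun ε hε => hR ε ⟨hε.1, le_trans hε.2 (min_le_left _ _)⟩⟩
      exact absurd (le_csSup hSbdd hyS) (not_le.mpr hCy)
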